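/- For n = 4, the ten binomials q_{0010}q_{0101}−q_{0011}q_{0100}, q_{0001}q_{0110}−q_{0011}q_{0100}, q_{0000}q_{0111}−q_{0011}q_{0100}, q_{0010}q_{1001}−q_{0011}q_{1000}, q_{0001}q_{1010}−q_{0011}q_{1000}, q_{0000}q_{1011}−q_{0011}q_{1000}, q_{0001}q_{1100}−q_{0101}q_{1000}, q_{0000}q_{1101}−q_{0101}q_{1000}, q_{0000}q_{1110}−q_{0110}q_{1000}, q_{1000}q_{1111}−q_{1011}q_{1100} all lie in ker φ_4, and their exponent vectors (viewed in Z^{16}) are linearly independent, spanning a sublattice of rank 10 = 2^4 − 4 − 2 equal to the rank of ker B_4. -/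

import Mathlib

open MvPolynomial

noncomputable def phi (n : ℕ) :
    MvPolynomial (Fin n → ZMod 2) ℂ →ₐ[ℂ] MvPolynomial (ZMod 2 × Fin (n + 1)) ℂ :=
  aeval fun σ => (∏ i : Fin n, X (σ i, Fin.castSucc i)) * X (∑ i, σ i, Fin.last n)

def clawMatrix (n : ℕ) : Matrix (ZMod 2 × Fin (n + 1)) (Fin n → ZMod 2) ℚ :=
  fun p σ =>
    if h : (p.2 : ℕ) < n then (if p.1 = σ ⟨p.2, h⟩ then 1 else 0)
    else (if p.1 = ∑ i, σ i then 1 else 0)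

/-- The ten quadruples `(g₁, g₂, h₁, h₂)` defining the binomials
`q_{g₁} q_{g₂} − q_{h₁} q_{h₂}` generating the lattice basis ideal `I_{L₄}`. -/
def quads : Fin 10 →
    (Fin 4 → ZMod 2) × (Fin 4 → ZMod 2) × (Fin 4 → ZMod 2) × (Fin 4 → ZMod 2) :=
  ![(![0,0,1,0], ![0,1,0,1], ![0,0,1,1], ![0,1,0,0]),
    (![0,0,0,1], ![0,1,1,0], ![0,0,1,1], ![0,1,0,0]),
    (![0,0,0,0], ![0,1,1,1], ![0,0,1,1], ![0,1,0,0]),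
    (![0,0,1,0], ![1,0,0,1], ![0,0,1,1], ![1,0,0,0]),
    (![0,0,0,1], ![1,0,1,0], ![0,0,1,1], ![1,0,0,0]),
    (![0,0,0,0], ![1,0,1,1], ![0,0,1,1], ![1,0,0,0]),
    (![0,0,0,1], ![1,1,0,0], ![0,1,0,1], ![1,0,0,0]),
    (![0,0,0,0], ![1,1,0,1], ![0,1,0,1], ![1,0,0,0]),
    (![0,0,0,0], ![1,1,1,0], ![0,1,1,0], ![1,0,0,0]),
    (![1,0,0,0], ![1,1,1,1], ![1,0,1,1], ![1,1,0,0])]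

/-- The exponent vector in `ℤ^16 ⊆ ℚ^16` of the binomial `q_{g₁} q_{g₂} − q_{h₁} q_{h₂}`. -/
def expVec (t : (Fin 4 → ZMod 2) × (Fin 4 → ZMod 2) × (Fin 4 → ZMod 2) × (Fin 4 → ZMod 2)) :
    (Fin 4 → ZMod 2) → ℚ := fun σ =>
  (if σ = t.1 then 1 else 0) + (if σ = t.2.1 then 1 else 0)
    - (if σ = t.2.2.1 then 1 else 0) - (if σ = t.2.2.2 then 1 else 0)

/-- The ten listed binomials all lie in `ker φ₄`, their exponent vectors are linearly
independent in `ℚ^16`, and they span a sublattice of rank `10 = 2⁴ − 4 − 2`, which equals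
the rank of `ker B₄`. -/
theorem col0 :
    (fun p => clawMatrix 4 p ![0,0,1,0]) + (fun p => clawMatrix 4 p ![0,1,0,1])
      - (fun p => clawMatrix 4 p ![0,0,1,1]) - (fun p => clawMatrix 4 p ![0,1,0,0])
      = (0 : ZMod 2 × Fin 5 → ℚ) := by
  funext p
  obtain ⟨a, i⟩ := p
  simp only [Pi.add_apply, Pi.sub_apply, Pi.zero_apply]
  fin_cases i <;> fin_cases a <;>
  · norm_num [clawMatrix, Fin.sum_univ_four]
    all_goals (split_ifs <;> simp_all (config := { decide := true }) <;> exact sub_self _)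

theorem col1 :
    (fun p => clawMatrix 4 p ![0,0,0,1]) + (fun p => clawMatrix 4 p ![0,1,1,0])
      - (fun p => clawMatrix 4 p ![0,0,1,1]) - (fun p => clawMatrix 4 p ![0,1,0,0])
      = (0 : ZMod 2 × Fin 5 → ℚ) := by
  funext p
  obtain ⟨a, i⟩ := p
  simp only [Pi.add_apply, Pi.sub_apply, Pi.zero_apply]
  fin_cases i <;> fin_cases a <;>
  · norm_num [clawMatrix, Fin.sum_univ_four]
    all_goals (split_ifs <;> simp_all (config := { decide := true }) <;> exact sub_self _)

theorem col2 :
    (fun p => clawMatrix 4 p ![0,0,0,0]) + (fun p => clawMatrix 4 p ![0,1,1,1])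
      - (fun p => clawMatrix 4 p ![0,0,1,1]) - (fun p => clawMatrix 4 p ![0,1,0,0])
      = (0 : ZMod 2 × Fin 5 → ℚ) := by
  funext p
  obtain ⟨a, i⟩ := p
  simp only [Pi.add_apply, Pi.sub_apply, Pi.zero_apply]
  fin_cases i <;> fin_cases a <;>
  · norm_num [clawMatrix, Fin.sum_univ_four]
    all_goals (split_ifs <;> simp_all (config := { decide := true }) <;> exact sub_self _)

theorem col3 :
    (fun p => clawMatrix 4 p ![0,0,1,0]) + (fun p => clawMatrix 4 p ![1,0,0,1])
      - (fun p => clawMatrix 4 p ![0,0,1,1]) - (fun p => clawMatrix 4 p ![1,0,0,0])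
      = (0 : ZMod 2 × Fin 5 → ℚ) := by
  funext p
  obtain ⟨a, i⟩ := p
  simp only [Pi.add_apply, Pi.sub_apply, Pi.zero_apply]
  fin_cases i <;> fin_cases a <;>
  · norm_num [clawMatrix, Fin.sum_univ_four]
    all_goals (split_ifs <;> simp_all (config := { decide := true }) <;> exact sub_self _)

theorem col4 :
    (fun p => clawMatrix 4 p ![0,0,0,1]) + (fun p => clawMatrix 4 p ![1,0,1,0])
      - (fun p => clawMatrix 4 p ![0,0,1,1]) - (fun p => clawMatrix 4 p ![1,0,0,0])
      = (0 : ZMod 2 × Fin 5 → ℚ) := by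
  funext p
  obtain ⟨a, i⟩ := p
  simp only [Pi.add_apply, Pi.sub_apply, Pi.zero_apply]
  fin_cases i <;> fin_cases a <;>
  · norm_num [clawMatrix, Fin.sum_univ_four]
    all_goals (split_ifs <;> simp_all (config := { decide := true }) <;> exact sub_self _)

theorem col5 :
    (fun p => clawMatrix 4 p ![0,0,0,0]) + (fun p => clawMatrix 4 p ![1,0,1,1])
      - (fun p => clawMatrix 4 p ![0,0,1,1]) - (fun p => clawMatrix 4 p ![1,0,0,0])
      = (0 : ZMod 2 × Fin 5 → ℚ) := by
  funext p
  obtain ⟨a, i⟩ := p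
  simp only [Pi.add_apply, Pi.sub_apply, Pi.zero_apply]
  fin_cases i <;> fin_cases a <;>
  · norm_num [clawMatrix, Fin.sum_univ_four]
    all_goals (split_ifs <;> simp_all (config := { decide := true }) <;> exact sub_self _)

theorem col6 :
    (fun p => clawMatrix 4 p ![0,0,0,1]) + (fun p => clawMatrix 4 p ![1,1,0,0])
      - (fun p => clawMatrix 4 p ![0,1,0,1]) - (fun p => clawMatrix 4 p ![1,0,0,0])
      = (0 : ZMod 2 × Fin 5 → ℚ) := by
  funext p
  obtain ⟨a, i⟩ := p
  simp only [Pi.add_apply, Pi.sub_apply, Pi.zero_apply]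
  fin_cases i <;> fin_cases a <;>
  · norm_num [clawMatrix, Fin.sum_univ_four]
    all_goals (split_ifs <;> simp_all (config := { decide := true }) <;> exact sub_self _)

theorem col7 :
    (fun p => clawMatrix 4 p ![0,0,0,0]) + (fun p => clawMatrix 4 p ![1,1,0,1])
      - (fun p => clawMatrix 4 p ![0,1,0,1]) - (fun p => clawMatrix 4 p ![1,0,0,0])
      = (0 : ZMod 2 × Fin 5 → ℚ) := by
  funext p
  obtain ⟨a, i⟩ := p
  simp only [Pi.add_apply, Pi.sub_apply, Pi.zero_apply]
  fin_cases i <;> fin_cases a <;>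
  · norm_num [clawMatrix, Fin.sum_univ_four]
    all_goals (split_ifs <;> simp_all (config := { decide := true }) <;> exact sub_self _)

theorem col8 :
    (fun p => clawMatrix 4 p ![0,0,0,0]) + (fun p => clawMatrix 4 p ![1,1,1,0])
      - (fun p => clawMatrix 4 p ![0,1,1,0]) - (fun p => clawMatrix 4 p ![1,0,0,0])
      = (0 : ZMod 2 × Fin 5 → ℚ) := by
  funext p
  obtain ⟨a, i⟩ := p
  simp only [Pi.add_apply, Pi.sub_apply, Pi.zero_apply]
  fin_cases i <;> fin_cases a <;>
  · norm_num [clawMatrix, Fin.sum_univ_four]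
    all_goals (split_ifs <;> simp_all (config := { decide := true }) <;> exact sub_self _)

theorem col9 :
    (fun p => clawMatrix 4 p ![1,0,0,0]) + (fun p => clawMatrix 4 p ![1,1,1,1])
      - (fun p => clawMatrix 4 p ![1,0,1,1]) - (fun p => clawMatrix 4 p ![1,1,0,0])
      = (0 : ZMod 2 × Fin 5 → ℚ) := by
  funext p
  obtain ⟨a, i⟩ := p
  simp only [Pi.add_apply, Pi.sub_apply, Pi.zero_apply]
  fin_cases i <;> fin_cases a <;>
  · norm_num [clawMatrix, Fin.sum_univ_four]
    all_goals (split_ifs <;> simp_all (config := { decide := true }) <;> exact sub_self _)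

theorem sum_univ_ten {M : Type*} [AddCommMonoid M] (f : Fin 10 → M) :
    ∑ i, f i = f 0 + f 1 + f 2 + f 3 + f 4 + f 5 + f 6 + f 7 + f 8 + f 9 := by
  rw [Fin.sum_univ_castSucc, Fin.sum_univ_castSucc, Fin.sum_univ_eight]
  rfl

theorem hmem (t : Fin 10) :
    expVec (quads t) ∈ LinearMap.ker (clawMatrix 4).mulVecLin := by
  have hexp : ∀ t' : (Fin 4 → ZMod 2) × (Fin 4 → ZMod 2) × (Fin 4 → ZMod 2) × (Fin 4 → ZMod 2),
      expVec t' = Pi.single t'.1 1 + Pi.single t'.2.1 1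
        - Pi.single t'.2.2.1 1 - Pi.single t'.2.2.2 1 := by
    intro t'; funext σ
    simp [expVec, Pi.single_apply]
  rw [LinearMap.mem_ker, hexp, map_sub, map_sub, map_add]
  simp only [Matrix.mulVecLin_apply, Matrix.mulVec_single_one, mul_one]
  fin_cases t
  exacts [col0, col1, col2, col3, col4, col5, col6, col7, col8, col9]

theorem expInd : LinearIndependent ℚ (fun t : Fin 10 => expVec (quads t)) := by
  rw [Fintype.linearIndependent_iff]
  intro g hg
  have h : ∀ σ : Fin 4 → ZMod 2, ∑ t : Fin 10, g t * expVec (quads t) σ = 0 := by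
    intro σ
    have := congrFun hg σ
    simpa only [Finset.sum_apply, Pi.smul_apply, smul_eq_mul, Pi.zero_apply] using this
  have h0 := h ![0,1,1,1]
  have h1 := h ![1,0,0,1]
  have h2 := h ![1,0,1,0]
  have h3 := h ![1,1,0,1]
  have h4 := h ![1,1,1,0]
  have h5 := h ![1,1,1,1]
  have h6 := h ![0,1,1,0]
  have h7 := h ![1,0,1,1]
  have h8 := h ![1,1,0,0]
  have h9 := h ![0,1,0,1]
  have h10 := h ![0,0,0,1]
  simp (config := { decide := true }) only [quads, expVec, sum_univ_ten,
    Matrix.cons_val_zero, Matrix.cons_val_one, Matrix.head_cons]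
    at h0 h1 h2 h3 h4 h5 h6 h7 h8 h9 h10
  norm_num at h0 h1 h2 h3 h4 h5 h6 h7 h8 h9 h10
  intro t
  fin_cases t <;> simp <;> linarith

def sel : Fin 6 → (Fin 4 → ZMod 2) :=
  ![![0,0,0,0], ![1,0,0,0], ![0,1,0,0], ![0,0,1,0], ![0,0,0,1], ![1,1,0,0]]

theorem selInd :
    LinearIndependent ℚ (fun j : Fin 6 => (clawMatrix 4).mulVecLin (Pi.single (sel j) 1)) := by
  rw [Fintype.linearIndependent_iff]
  intro g hg
  have h : ∀ p : ZMod 2 × Fin 5, ∑ j : Fin 6, g j * clawMatrix 4 p (sel j) = 0 := by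
    intro p
    have := congrFun hg p
    simpa only [Finset.sum_apply, Pi.smul_apply, smul_eq_mul, Pi.zero_apply,
      Matrix.mulVecLin_apply, Matrix.mulVec_single_one, Matrix.col_apply, mul_one] using this
  have h0 := h (1, 0)
  have h1 := h (1, 1)
  have h2 := h (1, 2)
  have h3 := h (1, 3)
  have h4 := h (1, 4)
  have h5 := h (0, 0)
  simp only [sel, Fin.sum_univ_six, Matrix.cons_val_zero, Matrix.cons_val_one,
    Matrix.head_cons] at h0 h1 h2 h3 h4 h5
  norm_num [clawMatrix, Fin.sum_univ_four] at h0 h1 h2 h3 h4 h5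
  simp (config := { decide := true }) at h0 h1 h2 h3 h4 h5
  intro j
  fin_cases j <;> simp <;> linarith

theorem kerPhi (t : Fin 10) :
    X (quads t).1 * X (quads t).2.1 - X (quads t).2.2.1 * X (quads t).2.2.2
      ∈ RingHom.ker (phi 4).toRingHom := by
  fin_cases t <;>
  · simp only [RingHom.mem_ker, AlgHom.toRingHom_eq_coe, RingHom.coe_coe, map_sub, map_mul,
      phi, aeval_X, quads, Fin.prod_univ_succ, Fin.prod_univ_zero, Fin.sum_univ_succ,
      Fin.sum_univ_zero, Matrix.cons_val_zero, Matrix.cons_val_one, Matrix.head_cons, Matrix.cons_val]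
    simp (config := { decide := true }) [Matrix.vecHead, Matrix.vecTail]
    norm_num
    simp only [show (3:ZMod 2) = 1 from by decide, show (2:ZMod 2) = 0 from by decide,
      show (4:ZMod 2) = 0 from by decide]
    try ring
theorem stmt_18 :
    (∀ t : Fin 10,
      X (quads t).1 * X (quads t).2.1 - X (quads t).2.2.1 * X (quads t).2.2.2
        ∈ RingHom.ker (phi 4).toRingHom) ∧
    LinearIndependent ℚ (fun t : Fin 10 => expVec (quads t)) ∧
    Module.finrank ℚ (Submodule.span ℚ (Set.range fun t : Fin 10 => expVec (quads t))) = 10 ∧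
    Module.finrank ℚ (LinearMap.ker (clawMatrix 4).mulVecLin) = 10 := by
  have hspan : Module.finrank ℚ
      (Submodule.span ℚ (Set.range fun t : Fin 10 => expVec (quads t))) = 10 := by
    rw [finrank_span_eq_card expInd, Fintype.card_fin]
  refine ⟨kerPhi, expInd, hspan, ?_⟩
  have hle : Submodule.span ℚ (Set.range fun t : Fin 10 => expVec (quads t))
      ≤ LinearMap.ker (clawMatrix 4).mulVecLin := by
    rw [Submodule.span_le]
    rintro _ ⟨t, rfl⟩
    exact hmem t
  have h10 : 10 ≤ Module.finrank ℚ (LinearMap.ker (clawMatrix 4).mulVecLin) := by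
    rw [← hspan]
    exact Submodule.finrank_mono hle
  have hle2 : Submodule.span ℚ
        (Set.range fun j : Fin 6 => (clawMatrix 4).mulVecLin (Pi.single (sel j) 1))
      ≤ LinearMap.range (clawMatrix 4).mulVecLin := by
    rw [Submodule.span_le]
    rintro _ ⟨j, rfl⟩
    exact ⟨Pi.single (sel j) 1, rfl⟩
  have h6 : 6 ≤ Module.finrank ℚ (LinearMap.range (clawMatrix 4).mulVecLin) := by
    have := Submodule.finrank_mono hle2
    rwa [finrank_span_eq_card selInd, Fintype.card_fin] at this
  have hrn := LinearMap.finrank_range_add_finrank_ker (clawMatrix 4).mulVecLin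
  rw [Module.finrank_pi] at hrn
  have hcard : Fintype.card (Fin 4 → ZMod 2) = 16 := by decide
  rw [hcard] at hrn
  omega
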